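/- If f is convex and L-Lipschitz, then its Gaussian smoothing f_μ satisfies f(x) ≤ f_μ(x) ≤ f(x) + √n · μ · L for all x. -/

import Mathlib

open MeasureTheory

lemma gauss_int (n : ℕ) (b : ℝ) (hb : 0 < b) :
    Integrable (fun v : EuclideanSpace ℝ (Fin n) => Real.exp (-b * ‖v‖^2)) := by
  have h := (GaussianFourier.integrable_cexp_neg_mul_sq_norm_add
    (V := EuclideanSpace ℝ (Fin n)) (b := (b:ℂ)) (by simpa using hb) 0 0).norm
  convert h using 2 with v
  simp [Complex.norm_exp]
  left; norm_cast

lemma gauss_w_int (n : ℕ) :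
    Integrable (fun v : EuclideanSpace ℝ (Fin n) => Real.exp (-‖v‖^2 / 2)) := by
  have := gauss_int n (1/2) (by norm_num)
  convert this using 2 with v
  ring_nf

lemma gauss_nw_int (n : ℕ) :
    Integrable (fun v : EuclideanSpace ℝ (Fin n) => ‖v‖ * Real.exp (-‖v‖^2 / 2)) := by
  apply (gauss_int n (1/4) (by norm_num)).mono'
  · exact (continuous_norm.mul (by continuity)).aestronglyMeasurable
  · filter_upwards with v
    have ht : (0:ℝ) ≤ ‖v‖ := norm_nonneg v
    have h1 : ‖v‖ ≤ Real.exp (‖v‖^2/4) := by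
      have := Real.add_one_le_exp (‖v‖^2/4)
      nlinarith [sq_nonneg (‖v‖/2 - 1)]
    have h2 : ‖v‖ * Real.exp (-‖v‖^2/2) ≤ Real.exp (‖v‖^2/4) * Real.exp (-‖v‖^2/2) :=
      mul_le_mul_of_nonneg_right h1 (Real.exp_pos _).le
    rw [← Real.exp_add] at h2
    rw [Real.norm_eq_abs, abs_of_nonneg (by positivity)]
    calc ‖v‖ * Real.exp (-‖v‖^2/2) ≤ Real.exp (‖v‖^2/4 + -‖v‖^2/2) := h2
      _ = Real.exp (-(1/4) * ‖v‖^2) := by ring_nf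

theorem gaussian_smoothing_bounds (n : ℕ) (L : ℝ) (hL : 0 ≤ L)
    (f : EuclideanSpace ℝ (Fin n) → ℝ)
    (hconv : ConvexOn ℝ Set.univ f)
    (hLip : ∀ x y : EuclideanSpace ℝ (Fin n), |f x - f y| ≤ L * ‖x - y‖)
    (μ : ℝ) (hμ : 0 < μ) (κ : ℝ) (hκ : κ = (2 * Real.pi) ^ ((n : ℝ) / 2))
    (hint : ∀ x : EuclideanSpace ℝ (Fin n),
      Integrable (fun ξ : EuclideanSpace ℝ (Fin n) => f (x + μ • ξ) * Real.exp (-‖ξ‖ ^ 2 / 2)))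
    (hone : (1 / κ) * (∫ ξ : EuclideanSpace ℝ (Fin n), Real.exp (-‖ξ‖ ^ 2 / 2)) = 1)
    (hmoment : (1 / κ) * (∫ ξ : EuclideanSpace ℝ (Fin n), ‖ξ‖ * Real.exp (-‖ξ‖ ^ 2 / 2))
      ≤ Real.sqrt n)
    (fμ : EuclideanSpace ℝ (Fin n) → ℝ)
    (hfμ : ∀ x, fμ x = (1 / κ) * ∫ ξ : EuclideanSpace ℝ (Fin n),
      f (x + μ • ξ) * Real.exp (-‖ξ‖ ^ 2 / 2)) :
    ∀ x, f x ≤ fμ x ∧ fμ x ≤ f x + Real.sqrt n * μ * L := by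
  have hκpos : 0 < κ := by
    rw [hκ]; exact Real.rpow_pos_of_pos (by positivity) _
  have hIw : Integrable (fun ξ : EuclideanSpace ℝ (Fin n) => Real.exp (-‖ξ‖ ^ 2 / 2)) :=
    gauss_w_int n
  have hInw : Integrable (fun ξ : EuclideanSpace ℝ (Fin n) => ‖ξ‖ * Real.exp (-‖ξ‖ ^ 2 / 2)) :=
    gauss_nw_int n
  have hIκ : (∫ ξ : EuclideanSpace ℝ (Fin n), Real.exp (-‖ξ‖ ^ 2 / 2)) = κ := by
    field_simp at hone; simpa [neg_div] using hone
  intro x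
  -- integrability of the reflected integrand
  have hneg_int : Integrable
      (fun ξ : EuclideanSpace ℝ (Fin n) => f (x - μ • ξ) * Real.exp (-‖ξ‖ ^ 2 / 2)) := by
    have h := ((Measure.measurePreserving_neg
        (volume : Measure (EuclideanSpace ℝ (Fin n)))).integrable_comp
        (hint x).aestronglyMeasurable).mpr (hint x)
    convert h using 2 with ξ
    simp [Function.comp, sub_eq_add_neg]
  have hneg_eq : (∫ ξ : EuclideanSpace ℝ (Fin n), f (x - μ • ξ) * Real.exp (-‖ξ‖ ^ 2 / 2))
      = ∫ ξ : EuclideanSpace ℝ (Fin n), f (x + μ • ξ) * Real.exp (-‖ξ‖ ^ 2 / 2) := by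
    rw [← integral_neg_eq_self (fun ξ : EuclideanSpace ℝ (Fin n) =>
      f (x + μ • ξ) * Real.exp (-‖ξ‖ ^ 2 / 2)) volume]
    congr 1 with ξ
    simp [sub_eq_add_neg]
  constructor
  · -- lower bound
    have hptw : ∀ ξ : EuclideanSpace ℝ (Fin n),
        f x * Real.exp (-‖ξ‖ ^ 2 / 2) ≤
        ((1/2) * f (x + μ • ξ) + (1/2) * f (x - μ • ξ)) * Real.exp (-‖ξ‖ ^ 2 / 2) := by
      intro ξ
      have hmid : (1/2 : ℝ) • (x + μ • ξ) + (1/2 : ℝ) • (x - μ • ξ) = x := by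
        module
      have h := hconv.2 (Set.mem_univ (x + μ • ξ)) (Set.mem_univ (x - μ • ξ))
        (by norm_num : (0:ℝ) ≤ 1/2) (by norm_num : (0:ℝ) ≤ 1/2) (by norm_num)
      rw [hmid] at h
      have := mul_le_mul_of_nonneg_right h (Real.exp_pos (-‖ξ‖ ^ 2 / 2)).le
      simpa [smul_eq_mul] using this
    have hRint : Integrable (fun ξ : EuclideanSpace ℝ (Fin n) =>
        ((1/2) * f (x + μ • ξ) + (1/2) * f (x - μ • ξ)) * Real.exp (-‖ξ‖ ^ 2 / 2)) := by
      have : (fun ξ : EuclideanSpace ℝ (Fin n) =>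
          ((1/2) * f (x + μ • ξ) + (1/2) * f (x - μ • ξ)) * Real.exp (-‖ξ‖ ^ 2 / 2))
          = fun ξ => (1/2) * (f (x + μ • ξ) * Real.exp (-‖ξ‖ ^ 2 / 2))
            + (1/2) * (f (x - μ • ξ) * Real.exp (-‖ξ‖ ^ 2 / 2)) := by
        funext ξ; ring
      rw [this]
      exact ((hint x).const_mul _).add (hneg_int.const_mul _)
    have hmono := integral_mono (hIw.const_mul (f x)) hRint hptw
    have hRval : (∫ ξ : EuclideanSpace ℝ (Fin n),
        ((1/2) * f (x + μ • ξ) + (1/2) * f (x - μ • ξ)) * Real.exp (-‖ξ‖ ^ 2 / 2))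
        = ∫ ξ : EuclideanSpace ℝ (Fin n), f (x + μ • ξ) * Real.exp (-‖ξ‖ ^ 2 / 2) := by
      have : (fun ξ : EuclideanSpace ℝ (Fin n) =>
          ((1/2) * f (x + μ • ξ) + (1/2) * f (x - μ • ξ)) * Real.exp (-‖ξ‖ ^ 2 / 2))
          = fun ξ => (1/2) * (f (x + μ • ξ) * Real.exp (-‖ξ‖ ^ 2 / 2))
            + (1/2) * (f (x - μ • ξ) * Real.exp (-‖ξ‖ ^ 2 / 2)) := by
        funext ξ; ring
      rw [this, integral_add ((hint x).const_mul _) (hneg_int.const_mul _),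
        integral_const_mul, integral_const_mul, hneg_eq]
      ring
    rw [integral_const_mul, hIκ, hRval] at hmono
    rw [hfμ x]
    calc f x = (1/κ) * (f x * κ) := by field_simp
      _ ≤ (1/κ) * ∫ ξ : EuclideanSpace ℝ (Fin n), f (x + μ • ξ) * Real.exp (-‖ξ‖ ^ 2 / 2) :=
        mul_le_mul_of_nonneg_left hmono (by positivity)
  · -- upper bound
    have hptw : ∀ ξ : EuclideanSpace ℝ (Fin n),
        f (x + μ • ξ) * Real.exp (-‖ξ‖ ^ 2 / 2) ≤
        (f x + L * μ * ‖ξ‖) * Real.exp (-‖ξ‖ ^ 2 / 2) := by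
      intro ξ
      have h1 : f (x + μ • ξ) - f x ≤ L * ‖(x + μ • ξ) - x‖ :=
        (abs_le.mp (hLip (x + μ • ξ) x)).2 |>.trans_eq rfl |>.trans (le_refl _)
      have h2 : ‖(x + μ • ξ) - x‖ = μ * ‖ξ‖ := by
        rw [add_sub_cancel_left, norm_smul, Real.norm_eq_abs, abs_of_pos hμ]
      rw [h2] at h1
      have : f (x + μ • ξ) ≤ f x + L * μ * ‖ξ‖ := by linarith [h1]
      exact mul_le_mul_of_nonneg_right this (Real.exp_pos _).le
    have hRint : Integrable (fun ξ : EuclideanSpace ℝ (Fin n) =>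
        (f x + L * μ * ‖ξ‖) * Real.exp (-‖ξ‖ ^ 2 / 2)) := by
      have : (fun ξ : EuclideanSpace ℝ (Fin n) =>
          (f x + L * μ * ‖ξ‖) * Real.exp (-‖ξ‖ ^ 2 / 2))
          = fun ξ => f x * Real.exp (-‖ξ‖ ^ 2 / 2)
            + (L * μ) * (‖ξ‖ * Real.exp (-‖ξ‖ ^ 2 / 2)) := by
        funext ξ; ring
      rw [this]
      exact (hIw.const_mul _).add (hInw.const_mul _)
    have hmono := integral_mono (hint x) hRint hptw
    have hRval : (∫ ξ : EuclideanSpace ℝ (Fin n),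
        (f x + L * μ * ‖ξ‖) * Real.exp (-‖ξ‖ ^ 2 / 2))
        = f x * κ + (L * μ) * ∫ ξ : EuclideanSpace ℝ (Fin n),
            ‖ξ‖ * Real.exp (-‖ξ‖ ^ 2 / 2) := by
      have : (fun ξ : EuclideanSpace ℝ (Fin n) =>
          (f x + L * μ * ‖ξ‖) * Real.exp (-‖ξ‖ ^ 2 / 2))
          = fun ξ => f x * Real.exp (-‖ξ‖ ^ 2 / 2)
            + (L * μ) * (‖ξ‖ * Real.exp (-‖ξ‖ ^ 2 / 2)) := by
        funext ξ; ring
      rw [this, integral_add (hIw.const_mul _) (hInw.const_mul _),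
        integral_const_mul, integral_const_mul, hIκ]
    rw [hRval] at hmono
    rw [hfμ x]
    have hstep : (1/κ) * (∫ ξ : EuclideanSpace ℝ (Fin n),
        f (x + μ • ξ) * Real.exp (-‖ξ‖ ^ 2 / 2))
        ≤ (1/κ) * (f x * κ + (L * μ) * ∫ ξ : EuclideanSpace ℝ (Fin n),
            ‖ξ‖ * Real.exp (-‖ξ‖ ^ 2 / 2)) :=
      mul_le_mul_of_nonneg_left hmono (by positivity)
    have hexp : (1/κ) * (f x * κ + (L * μ) * ∫ ξ : EuclideanSpace ℝ (Fin n),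
        ‖ξ‖ * Real.exp (-‖ξ‖ ^ 2 / 2))
        = f x + (L * μ) * ((1/κ) * ∫ ξ : EuclideanSpace ℝ (Fin n),
            ‖ξ‖ * Real.exp (-‖ξ‖ ^ 2 / 2)) := by
      field_simp
    rw [hexp] at hstep
    have hfin : (L * μ) * ((1/κ) * ∫ ξ : EuclideanSpace ℝ (Fin n),
        ‖ξ‖ * Real.exp (-‖ξ‖ ^ 2 / 2)) ≤ Real.sqrt n * μ * L := by
      have := mul_le_mul_of_nonneg_left hmoment (by positivity : (0:ℝ) ≤ L * μ)
      linarith [this]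
    linarith [hstep, hfin]
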